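/- If S is a subtle subset of a regular uncountable cardinal κ, then the set of inaccessible cardinals below κ intersects S; in fact the set of non-inaccessible ordinals below κ, intersected with S, is not subtle, i.e., the inaccessibles below κ lie in the subtle filter. -/

import Mathlib

open Set

/-- `C` is unbounded in `δ`. -/
def UnbIn (δ : Ordinal) (C : Set Ordinal) : Prop :=
  ∀ β < δ, ∃ γ ∈ C, β ≤ γ ∧ γ < δ

/-- `C` is a club (closed unbounded) subset of `κ`. -/
def IsClubIn (κ : Ordinal) (C : Set Ordinal) : Prop :=
  C ⊆ Set.Iio κ ∧ UnbIn κ C ∧ ∀ α < κ, α ≠ 0 → UnbIn α C → α ∈ C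

/-- `a` is an `A`-list: `a α ⊆ α` for all `α ∈ A`. -/
def IsList (A : Set Ordinal) (a : Ordinal → Set Ordinal) : Prop :=
  ∀ α ∈ A, a α ⊆ Set.Iio α

/-- `H` is homogeneous for the list `a`. -/
def Homog (a : Ordinal → Set Ordinal) (H : Set Ordinal) : Prop :=
  ∀ α ∈ H, ∀ β ∈ H, α < β → a α = a β ∩ Set.Iio α

/-- `κ` is (the ordinal of) a regular uncountable cardinal. -/
def RegUncountable (κ : Ordinal) : Prop :=
  κ.card.ord = κ ∧ κ.card.IsRegular ∧ Cardinal.aleph0 < κ.card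

/-- `S ⊆ κ` is subtle: every `S`-list and club admit a coherent pair. -/
def Subtle (κ : Ordinal) (S : Set Ordinal) : Prop :=
  S ⊆ Set.Iio κ ∧ ∀ a, IsList S a → ∀ C, IsClubIn κ C →
    ∃ α ∈ S ∩ C, ∃ β ∈ S ∩ C, α < β ∧ a α = a β ∩ Set.Iio α

/-- `α` is (the ordinal of) a strongly inaccessible cardinal. -/
def OrdInaccessible (α : Ordinal) : Prop :=
  α.card.ord = α ∧ α.card.IsInaccessible



section SubtleAux
open Set Ordinal Cardinal Order
universe u


lemma myadd_lt_ord {c : Cardinal.{u}} (hc : ℵ₀ ≤ c) {x y : Ordinal.{u}}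
    (hx : x < c.ord) (hy : y < c.ord) : x + y < c.ord := by
  rw [Cardinal.lt_ord] at *
  rw [Ordinal.card_add]
  exact Cardinal.add_lt_of_lt hc hx hy

lemma three_lt_ord {c : Cardinal.{u}} (hc : ℵ₀ ≤ c) : (3 : Ordinal.{u}) < c.ord := by
  have h1 : ((3:ℕ) : Ordinal.{u}) < ω := Ordinal.nat_lt_omega0 3
  have h2 : ω ≤ c.ord := by
    rw [← Cardinal.ord_aleph0]; exact Cardinal.ord_le_ord.2 hc
  simpa using h1.trans_le h2

lemma add3_lt {c : Cardinal.{u}} (hc : ℵ₀ ≤ c) {x : Ordinal.{u}} (hx : x < c.ord) :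
    x + 3 < c.ord :=
  myadd_lt_ord hc hx (three_lt_ord hc)

lemma add3_eq_succ (x : Ordinal.{u}) : x + 3 = succ (succ (succ x)) := by
  rw [← two_add_one_eq_three, ← one_add_one_eq_two, ← add_assoc, ← add_assoc,
    Ordinal.add_one_eq_succ, Ordinal.add_one_eq_succ, Ordinal.add_one_eq_succ]

lemma add3_injective : Function.Injective (fun x : Ordinal.{u} => x + 3) := by
  intro a b h
  simp only [add3_eq_succ] at h
  exact succ_injective (succ_injective (succ_injective h))

lemma add3_ne_limit {L x : Ordinal.{u}} (hL : Order.IsSuccLimit L) : x + 3 ≠ L := by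
  rw [add3_eq_succ]
  intro h
  have := hL.succ_lt (h ▸ lt_succ (succ (succ x)))
  rw [h] at this
  exact lt_irrefl _ this

lemma add3_ne_zero (x : Ordinal.{u}) : x + 3 ≠ 0 := by
  rw [add3_eq_succ]; exact (succ_ne_bot _)

lemma add3_ne_one (x : Ordinal.{u}) : x + 3 ≠ 1 := by
  rw [add3_eq_succ, show (1 : Ordinal.{u}) = succ 0 by simp [← Ordinal.add_one_eq_succ]]
  intro h
  have h2 := succ_injective h
  exact (succ_ne_bot _) h2

lemma one_lt_omega' : (1 : Ordinal.{u}) < ω := Ordinal.one_lt_omega0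

lemma aux_exists_inj (o t : Ordinal.{u}) (h : o.card ≤ 2 ^ t.card) :
    ∃ k : Set.Iio o → Set Ordinal.{u}, Function.Injective k ∧ ∀ x, k x ⊆ Set.Iio t := by
  have h1 : #(Set.Iio o) ≤ #(Set (Set.Iio t)) := by
    rw [Cardinal.mk_set, Ordinal.mk_Iio_ordinal, Ordinal.mk_Iio_ordinal]
    have := Cardinal.lift_le.{u+1}.mpr h
    rwa [Cardinal.lift_power, Cardinal.lift_two] at this
  obtain ⟨f⟩ := Cardinal.le_def _ _ |>.1 h1
  refine ⟨fun x => Subtype.val '' (f x), ?_, ?_⟩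
  · intro a b hab
    exact f.injective ((Set.image_injective.2 Subtype.val_injective) hab)
  · rintro x y ⟨z, _, rfl⟩
    exact z.2


/-- Case-1 descriptor: `α` is not a cardinal; code it by a subset of `lam.ord`. -/
def BCase1 (k1 : ∀ lam : Cardinal.{u}, Set.Iio ((Order.succ lam).ord) → Set Ordinal.{u})
    (α : Ordinal.{u}) (b : Set Ordinal.{u}) : Prop :=
  ∃ (lam : Cardinal.{u}) (_ : ℵ₀ ≤ lam) (_ : lam.ord < α)
    (q : α ∈ Set.Iio ((Order.succ lam).ord)),
      b = (fun x => x + 3) '' (k1 lam ⟨α, q⟩) ∪ {lam.ord}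

/-- Case-2 descriptor: `α` is a singular cardinal; mark `0`, record the cofinality and
a shifted fundamental sequence. -/
def BCase2 (f : ∀ α : Ordinal.{u}, ∀ b < α.cof.ord, Ordinal.{u})
    (α : Ordinal.{u}) (b : Set Ordinal.{u}) : Prop :=
  ∃ (_ : α.card.ord = α) (_ : ℵ₀ ≤ α.card) (_ : α.cof.ord < α),
    b = insert 0 (insert α.cof.ord
      {x | ∃ i, ∃ hi : i < α.cof.ord, x = (α.cof.ord + 1) + f α i hi})

/-- Case-3 descriptor: `α` is a regular non-strong-limit cardinal; mark `1`,
record a witness `c` and a code below `c.ord`. -/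
def BCase3
    (k3 : ∀ c : Cardinal.{u}, ℵ₀ ≤ c → (Set.Iio (((2 : Cardinal.{u}) ^ c).ord + 1) → Set Ordinal.{u}))
    (α : Ordinal.{u}) (b : Set Ordinal.{u}) : Prop :=
  ∃ (c : Cardinal.{u}) (hc : ℵ₀ ≤ c) (_ : c.ord < α)
    (q : α ∈ Set.Iio (((2 : Cardinal.{u}) ^ c).ord + 1)),
      b = insert 1 ((fun x => x + 3) '' (k3 c hc ⟨α, q⟩) ∪ {c.ord})


variable {k1 : ∀ lam : Cardinal.{u}, Set.Iio ((Order.succ lam).ord) → Set Ordinal.{u}}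
variable {k3 : ∀ c : Cardinal.{u}, ℵ₀ ≤ c → (Set.Iio (((2 : Cardinal.{u}) ^ c).ord + 1) → Set Ordinal.{u})}
variable {f : ∀ α : Ordinal.{u}, ∀ b < α.cof.ord, Ordinal.{u}}

lemma omega_le_ord {c : Cardinal.{u}} (hc : ℵ₀ ≤ c) : ω ≤ c.ord := by
  rw [← Cardinal.ord_aleph0]; exact Cardinal.ord_le_ord.2 hc

lemma ord_ne_zero {c : Cardinal.{u}} (hc : ℵ₀ ≤ c) : c.ord ≠ 0 :=
  fun h => Ordinal.omega0_ne_zero (le_antisymm (h ▸ omega_le_ord hc) (zero_le (a := ω)))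

lemma ord_ne_one {c : Cardinal.{u}} (hc : ℵ₀ ≤ c) : c.ord ≠ 1 :=
  fun h => absurd (h ▸ omega_le_ord hc) (not_le.2 (h ▸ Ordinal.one_lt_omega0))

lemma bcase1_marks {α : Ordinal.{u}} {b : Set Ordinal.{u}} (h : BCase1 k1 α b) :
    0 ∉ b ∧ 1 ∉ b := by
  obtain ⟨lam, hlam, hlt, q, rfl⟩ := h
  constructor
  · rintro (⟨x, _, hx⟩ | h0)
    · exact add3_ne_zero x hx
    · exact ord_ne_zero hlam (Set.mem_singleton_iff.1 h0).symm
  · rintro (⟨x, _, hx⟩ | h0)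
    · exact add3_ne_one x hx
    · exact ord_ne_one hlam (Set.mem_singleton_iff.1 h0).symm

lemma bcase2_nu_omega {α : Ordinal.{u}} (hcard : α.card.ord = α) (hc : ℵ₀ ≤ α.card) :
    ω ≤ α.cof.ord := by
  rw [← Cardinal.ord_aleph0]
  exact Cardinal.ord_le_ord.2 (Ordinal.aleph0_le_cof.2 (hcard ▸ Cardinal.isSuccLimit_ord hc))

lemma bcase2_tail_gt {α x : Ordinal.{u}}
    (hx : x ∈ {x : Ordinal.{u} | ∃ i, ∃ hi : i < α.cof.ord, x = (α.cof.ord + 1) + f α i hi}) :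
    α.cof.ord < x := by
  obtain ⟨i, hi, rfl⟩ := hx
  calc α.cof.ord < α.cof.ord + 1 := by
        rw [Ordinal.add_one_eq_succ]; exact lt_succ _
  _ ≤ (α.cof.ord + 1) + f α i hi := le_self_add

lemma bcase2_marks {α : Ordinal.{u}} {b : Set Ordinal.{u}} (h : BCase2 f α b) :
    0 ∈ b ∧ 1 ∉ b := by
  obtain ⟨hcard, hc, hsing, rfl⟩ := h
  have hν := bcase2_nu_omega hcard hc
  refine ⟨Set.mem_insert _ _, ?_⟩
  rintro (h1 | h1 | h1)
  · exact Ordinal.one_ne_zero h1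
  · exact ord_ne_one (Ordinal.aleph0_le_cof.2 (hcard ▸ Cardinal.isSuccLimit_ord hc)) h1.symm
  · have := bcase2_tail_gt (f := f) h1
    exact absurd (Ordinal.one_lt_omega0.trans_le hν) (not_lt.2 this.le)

lemma bcase3_marks {α : Ordinal.{u}} {b : Set Ordinal.{u}} (h : BCase3 k3 α b) :
    1 ∈ b ∧ 0 ∉ b := by
  obtain ⟨c, hc, hlt, q, rfl⟩ := h
  refine ⟨Set.mem_insert _ _, ?_⟩
  rintro (h1 | ⟨x, _, hx⟩ | h1)
  · exact Ordinal.one_ne_zero h1.symm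
  · exact add3_ne_zero x hx
  · exact ord_ne_zero hc (Set.mem_singleton_iff.1 h1).symm



variable {k1 : ∀ lam : Cardinal.{u}, Set.Iio ((Order.succ lam).ord) → Set Ordinal.{u}}
variable {k3 : ∀ c : Cardinal.{u}, ℵ₀ ≤ c → (Set.Iio (((2 : Cardinal.{u}) ^ c).ord + 1) → Set Ordinal.{u})}
variable {f : ∀ α : Ordinal.{u}, ∀ b < α.cof.ord, Ordinal.{u}}

lemma bcase1_sub (hk1b : ∀ lam x, k1 lam x ⊆ Set.Iio lam.ord)
    {α : Ordinal.{u}} {b : Set Ordinal.{u}} (h : BCase1 k1 α b) : b ⊆ Set.Iio α := by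
  obtain ⟨lam, hlam, hlt, q, rfl⟩ := h
  rintro x (⟨y, hy, rfl⟩ | hx)
  · exact (add3_lt hlam (hk1b lam _ hy)).trans hlt
  · exact (Set.mem_singleton_iff.1 hx) ▸ hlt

lemma bcase2_tail_lt (hf : ∀ α : Ordinal.{u}, IsFundamentalSequence α α.cof.ord (f α))
    {α x : Ordinal.{u}} (hcard : α.card.ord = α) (hc : ℵ₀ ≤ α.card) (hsing : α.cof.ord < α)
    (hx : x ∈ {x : Ordinal.{u} | ∃ i, ∃ hi : i < α.cof.ord, x = (α.cof.ord + 1) + f α i hi}) :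
    x < α := by
  obtain ⟨i, hi, rfl⟩ := hx
  have hflt : f α i hi < α := by
    conv_rhs => rw [← (hf α).2.2]
    exact Ordinal.lt_blsub _ _ _
  have hν1 : α.cof.ord + 1 < α := by
    rw [Ordinal.add_one_eq_succ]
    exact (hcard ▸ Cardinal.isSuccLimit_ord hc).succ_lt hsing
  have key : ∀ x y : Ordinal.{u}, x < α → y < α → x + y < α := by
    intro x y hx hy
    rw [← hcard] at hx hy ⊢
    exact myadd_lt_ord hc hx hy
  exact key _ _ hν1 hflt

lemma bcase2_sub (hf : ∀ α : Ordinal.{u}, IsFundamentalSequence α α.cof.ord (f α))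
    {α : Ordinal.{u}} {b : Set Ordinal.{u}} (hω : ω < α) (h : BCase2 f α b) :
    b ⊆ Set.Iio α := by
  obtain ⟨hcard, hc, hsing, rfl⟩ := h
  rintro x (hx | hx | hx)
  · exact hx ▸ (Ordinal.omega0_pos.trans hω)
  · exact hx ▸ hsing
  · exact bcase2_tail_lt hf hcard hc hsing hx

lemma bcase3_sub (hk3b : ∀ c hc x, k3 c hc x ⊆ Set.Iio c.ord)
    {α : Ordinal.{u}} {b : Set Ordinal.{u}} (hω : ω < α) (h : BCase3 k3 α b) :
    b ⊆ Set.Iio α := by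
  obtain ⟨c, hc, hlt, q, rfl⟩ := h
  rintro x (hx | ⟨y, hy, rfl⟩ | hx)
  · exact hx ▸ (Ordinal.one_lt_omega0.trans hω)
  · exact (add3_lt hc (hk3b c hc _ hy)).trans hlt
  · exact (Set.mem_singleton_iff.1 hx) ▸ hlt



variable {k1 : ∀ lam : Cardinal.{u}, Set.Iio ((Order.succ lam).ord) → Set Ordinal.{u}}
variable {k3 : ∀ c : Cardinal.{u}, ℵ₀ ≤ c → (Set.Iio (((2 : Cardinal.{u}) ^ c).ord + 1) → Set Ordinal.{u})}
variable {f : ∀ α : Ordinal.{u}, ∀ b < α.cof.ord, Ordinal.{u}}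

lemma nopair1 (hk1i : ∀ lam, Function.Injective (k1 lam))
    (hk1b : ∀ lam x, k1 lam x ⊆ Set.Iio lam.ord)
    {α β : Ordinal.{u}} {bα bβ : Set Ordinal.{u}} (hαβ : α < β)
    (h1 : BCase1 k1 α bα) (g1 : BCase1 k1 β bβ)
    (heq : bα = bβ ∩ Set.Iio α) : False := by
  obtain ⟨lam, hlam, hlt, q, rfl⟩ := h1
  obtain ⟨lam', hlam', hlt', q', rfl⟩ := g1
  have hLlim : Order.IsSuccLimit (lam.ord) := Cardinal.isSuccLimit_ord hlam
  have hmem : lam.ord ∈ (fun x => x + 3) '' (k1 lam' ⟨β, q'⟩) ∪ {lam'.ord} := by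
    have h0 : lam.ord ∈ (fun x => x + 3) '' (k1 lam ⟨α, q⟩) ∪ {lam.ord} :=
      Set.mem_union_right _ rfl
    rw [heq] at h0
    exact h0.1
  have hll : lam' = lam := by
    rcases hmem with ⟨x, _, hx⟩ | h
    · exact absurd hx (add3_ne_limit hLlim)
    · exact Cardinal.ord_injective (Set.mem_singleton_iff.1 h).symm
  subst hll
  have hsubβ : ((fun x => x + 3) '' (k1 lam' ⟨β, q'⟩) ∪ {lam'.ord} : Set Ordinal.{u})
      ⊆ Set.Iio α := by
    rintro x (⟨y, hy, rfl⟩ | hx)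
    · exact (add3_lt hlam (hk1b lam' _ hy)).trans hlt
    · exact (Set.mem_singleton_iff.1 hx) ▸ hlt
  rw [Set.inter_eq_self_of_subset_left hsubβ] at heq
  have himg : (fun x => x + 3) '' (k1 lam' ⟨α, q⟩) = (fun x => x + 3) '' (k1 lam' ⟨β, q'⟩) := by
    apply Set.Subset.antisymm
    · intro x hx
      have hx' : x ∈ (fun x => x + 3) '' (k1 lam' ⟨β, q'⟩) ∪ {lam'.ord} :=
        heq ▸ Set.mem_union_left _ hx
      rcases hx' with hx' | hx'
      · exact hx'
      · obtain ⟨y, _, rfl⟩ := hx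
        exact absurd (Set.mem_singleton_iff.1 hx') (add3_ne_limit hLlim)
    · intro x hx
      have hx' : x ∈ (fun x => x + 3) '' (k1 lam' ⟨α, q⟩) ∪ {lam'.ord} :=
        heq.symm ▸ Set.mem_union_left _ hx
      rcases hx' with hx' | hx'
      · exact hx'
      · obtain ⟨y, _, rfl⟩ := hx
        exact absurd (Set.mem_singleton_iff.1 hx') (add3_ne_limit hLlim)
  have hsub := hk1i lam' (Set.image_injective.2 add3_injective himg)
  have : α = β := congrArg Subtype.val hsub
  exact absurd this hαβ.ne

lemma nopair3 (hk3i : ∀ c hc, Function.Injective (k3 c hc))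
    (hk3b : ∀ c hc x, k3 c hc x ⊆ Set.Iio c.ord)
    {α β : Ordinal.{u}} {bα bβ : Set Ordinal.{u}} (hω : ω < α) (hαβ : α < β)
    (h3 : BCase3 k3 α bα) (g3 : BCase3 k3 β bβ)
    (heq : bα = bβ ∩ Set.Iio α) : False := by
  obtain ⟨c, hc, hlt, q, rfl⟩ := h3
  obtain ⟨c', hc', hlt', q', rfl⟩ := g3
  have hLlim : Order.IsSuccLimit (c.ord) := Cardinal.isSuccLimit_ord hc
  have hmem : c.ord ∈ insert 1 ((fun x => x + 3) '' (k3 c' hc' ⟨β, q'⟩) ∪ {c'.ord}) := by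
    have h0 : c.ord ∈ insert 1 ((fun x => x + 3) '' (k3 c hc ⟨α, q⟩) ∪ {c.ord}) := by
      exact Set.mem_insert_iff.2 (Or.inr (Set.mem_union_right _ rfl))
    rw [heq] at h0
    exact h0.1
  have hcc : c' = c := by
    rcases hmem with h | ⟨x, _, hx⟩ | h
    · exact absurd h (ord_ne_one hc)
    · exact absurd hx (add3_ne_limit hLlim)
    · exact Cardinal.ord_injective (Set.mem_singleton_iff.1 h).symm
  subst hcc
  have hcc' : hc' = hc := rfl
  subst hcc'
  have hsubβ : (insert 1 ((fun x => x + 3) '' (k3 c' hc' ⟨β, q'⟩) ∪ {c'.ord}) : Set Ordinal.{u})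
      ⊆ Set.Iio α := by
    rintro x (hx | ⟨y, hy, rfl⟩ | hx)
    · exact hx ▸ (Ordinal.one_lt_omega0.trans hω)
    · exact (add3_lt hc' (hk3b c' hc' _ hy)).trans hlt
    · exact (Set.mem_singleton_iff.1 hx) ▸ hlt
  rw [Set.inter_eq_self_of_subset_left hsubβ] at heq
  have himg : (fun x => x + 3) '' (k3 c' hc' ⟨α, q⟩) = (fun x => x + 3) '' (k3 c' hc' ⟨β, q'⟩) := by
    apply Set.Subset.antisymm
    · intro x hx
      have hx' : x ∈ insert 1 ((fun x => x + 3) '' (k3 c' hc' ⟨β, q'⟩) ∪ {c'.ord}) :=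
        heq ▸ Set.mem_insert_iff.2 (Or.inr (Set.mem_union_left _ hx))
      obtain ⟨y, _, rfl⟩ := hx
      rcases hx' with hx' | hx' | hx'
      · exact absurd hx' (add3_ne_one y)
      · exact hx'
      · exact absurd (Set.mem_singleton_iff.1 hx') (add3_ne_limit hLlim)
    · intro x hx
      have hx' : x ∈ insert 1 ((fun x => x + 3) '' (k3 c' hc' ⟨α, q⟩) ∪ {c'.ord}) :=
        heq.symm ▸ Set.mem_insert_iff.2 (Or.inr (Set.mem_union_left _ hx))
      obtain ⟨y, _, rfl⟩ := hx
      rcases hx' with hx' | hx' | hx'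
      · exact absurd hx' (add3_ne_one y)
      · exact hx'
      · exact absurd (Set.mem_singleton_iff.1 hx') (add3_ne_limit hLlim)
  have hsub := hk3i c' hc' (Set.image_injective.2 add3_injective himg)
  have : α = β := congrArg Subtype.val hsub
  exact absurd this hαβ.ne



variable {f : ∀ α : Ordinal.{u}, ∀ b < α.cof.ord, Ordinal.{u}}

lemma nopair2 (hf : ∀ α : Ordinal.{u}, IsFundamentalSequence α α.cof.ord (f α))
    {α β : Ordinal.{u}} {bα bβ : Set Ordinal.{u}} (hω : ω < α) (hαβ : α < β)
    (h2 : BCase2 f α bα) (g2 : BCase2 f β bβ)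
    (heq : bα = bβ ∩ Set.Iio α) : False := by
  obtain ⟨hcα, hℵα, hsingα, rfl⟩ := h2
  obtain ⟨hcβ, hℵβ, hsingβ, rfl⟩ := g2
  set Tα : Set Ordinal.{u} :=
    {x | ∃ i, ∃ hi : i < α.cof.ord, x = (α.cof.ord + 1) + f α i hi} with hTαdef
  set Tβ : Set Ordinal.{u} :=
    {x | ∃ i, ∃ hi : i < β.cof.ord, x = (β.cof.ord + 1) + f β i hi} with hTβdef
  have hνωα : ω ≤ α.cof.ord := bcase2_nu_omega hcα hℵα
  have hνωβ : ω ≤ β.cof.ord := bcase2_nu_omega hcβ hℵβ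
  have hm : ∀ x, x < α →
      (x ∈ insert 0 (insert α.cof.ord Tα) ↔ x ∈ insert 0 (insert β.cof.ord Tβ)) := by
    intro x hx
    constructor
    · intro h; rw [heq] at h; exact h.1
    · intro h; exact heq.symm ▸ (Set.mem_inter h hx)
  -- Step 1 : the cofinalities agree
  have hνν : α.cof.ord = β.cof.ord := by
    have h1 := (hm _ hsingα).1 (Set.mem_insert_iff.2 (Or.inr (Set.mem_insert _ _)))
    rcases h1 with h1 | h1 | h1
    · exact absurd h1 (ord_ne_zero (Ordinal.aleph0_le_cof.2 (hcα ▸ Cardinal.isSuccLimit_ord hℵα)))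
    · exact h1
    · exfalso
      have hlt1 : β.cof.ord < α.cof.ord := bcase2_tail_gt (f := f) h1
      have h2 := (hm _ (hlt1.trans hsingα)).2
        (Set.mem_insert_iff.2 (Or.inr (Set.mem_insert _ _)))
      rcases h2 with h2 | h2 | h2
      · exact ord_ne_zero (Ordinal.aleph0_le_cof.2 (hcβ ▸ Cardinal.isSuccLimit_ord hℵβ)) h2
      · exact absurd (h2 ▸ hlt1) (lt_irrefl _)
      · exact absurd (hlt1.trans (bcase2_tail_gt (f := f) h2)) (lt_irrefl _)
  -- Step 2 : the tails cohere
  have hT : Tα = Tβ ∩ Set.Iio α := by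
    apply Set.Subset.antisymm
    · intro x hx
      have hxα : x < α := bcase2_tail_lt hf hcα hℵα hsingα hx
      have hx' := (hm x hxα).1 (Set.mem_insert_iff.2 (Or.inr (Set.mem_insert_iff.2 (Or.inr hx))))
      rcases hx' with hx' | hx' | hx'
      · exact absurd (hx' ▸ bcase2_tail_gt (f := f) hx)
          (by simpa using (Ordinal.omega0_pos.trans_le hνωα).not_lt)
      · exact absurd ((hx' ▸ hνν) ▸ bcase2_tail_gt (f := f) hx) (lt_irrefl _)
      · exact Set.mem_inter hx' hxα
    · rintro x ⟨hx, hxα⟩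
      have hx' := (hm x hxα).2 (Set.mem_insert_iff.2 (Or.inr (Set.mem_insert_iff.2 (Or.inr hx))))
      rcases hx' with hx' | hx' | hx'
      · exact absurd (hx' ▸ bcase2_tail_gt (f := f) hx)
          (by simpa using (Ordinal.omega0_pos.trans_le hνωβ).not_lt)
      · exact absurd ((hx'.symm ▸ hνν) ▸ bcase2_tail_gt (f := f) hx) (lt_irrefl _)
      · exact hx'
  -- Step 3 : index of the first element of the β-tail at least α
  set I : Set Ordinal.{u} :=
    {i | ∃ hi : i < β.cof.ord, α ≤ (β.cof.ord + 1) + f β i hi} with hIdef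
  have hne : I.Nonempty := by
    have : α < Ordinal.blsub β.cof.ord (f β) := by rw [(hf β).2.2]; exact hαβ
    obtain ⟨i, hi, hle⟩ := Ordinal.lt_blsub_iff.1 this
    exact ⟨i, hi, hle.trans (le_add_self)⟩
  have hi₀I : sInf I ∈ I := csInf_mem hne
  obtain ⟨hi₀, hαi₀⟩ := hi₀I
  set i₀ := sInf I
  -- Step 4 : α is a blsub of length i₀ < β.cof.ord
  have hgα : Ordinal.blsub i₀ (fun i hi => (β.cof.ord + 1) + f β i (hi.trans hi₀)) = α := by
    apply le_antisymm
    · apply Ordinal.blsub_le_iff.2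
      intro i hi
      by_contra hge
      push_neg at hge
      have hiI : i ∈ I := ⟨hi.trans hi₀, hge⟩
      exact absurd (csInf_le (OrderBot.bddBelow _) hiI) (not_le.2 hi)
    · apply le_of_forall_lt
      intro x hx
      have : x < Ordinal.blsub α.cof.ord (f α) := by rw [(hf α).2.2]; exact hx
      obtain ⟨j, hj, hle⟩ := Ordinal.lt_blsub_iff.1 this
      set t : Ordinal.{u} := (α.cof.ord + 1) + f α j hj with htdef
      have htα : t ∈ Tα := ⟨j, hj, rfl⟩
      have hxt : x ≤ t := hle.trans (le_add_self)
      rw [hT] at htα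
      obtain ⟨⟨jj, hjj, htval⟩, htlt⟩ := htα
      have hjji : jj < i₀ := by
        by_contra hgejj
        push_neg at hgejj
        have : α ≤ (β.cof.ord + 1) + f β jj hjj :=
          hαi₀.trans (add_le_add_right ((hf β).monotone hi₀ hjj hgejj) _)
        exact absurd (htval ▸ this) (not_le.2 htlt)
      calc x ≤ t := hxt
      _ = (β.cof.ord + 1) + f β jj (hjji.trans hi₀) := htval
      _ < _ := Ordinal.lt_blsub _ jj hjji
  have h5 : α.cof ≤ i₀.card := by
    have := Ordinal.cof_blsub_le (fun i (hi : i < i₀) => (β.cof.ord + 1) + f β i (hi.trans hi₀))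
    rwa [hgα] at this
  have h6 : i₀.card < α.cof := Cardinal.lt_ord.1 (hνν ▸ hi₀)
  exact absurd h5 (not_le.2 h6)



variable {k1 : ∀ lam : Cardinal.{u}, Set.Iio ((Order.succ lam).ord) → Set Ordinal.{u}}
variable {k3 : ∀ c : Cardinal.{u}, ℵ₀ ≤ c → (Set.Iio (((2 : Cardinal.{u}) ^ c).ord + 1) → Set Ordinal.{u})}
variable {f : ∀ α : Ordinal.{u}, ∀ b < α.cof.ord, Ordinal.{u}}

lemma exists_case (k1 : ∀ lam : Cardinal.{u}, Set.Iio ((Order.succ lam).ord) → Set Ordinal.{u})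
    (k3 : ∀ c : Cardinal.{u}, ℵ₀ ≤ c → (Set.Iio (((2 : Cardinal.{u}) ^ c).ord + 1) → Set Ordinal.{u}))
    (f : ∀ α : Ordinal.{u}, ∀ b < α.cof.ord, Ordinal.{u})
    (hk1b : ∀ lam x, k1 lam x ⊆ Set.Iio lam.ord)
    (hk3b : ∀ c hc x, k3 c hc x ⊆ Set.Iio c.ord)
    (hf : ∀ α : Ordinal.{u}, IsFundamentalSequence α α.cof.ord (f α)) :
    ∀ α : Ordinal.{u}, ∃ b : Set Ordinal.{u}, b ⊆ Set.Iio α ∧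
      (ω < α → ¬ OrdInaccessible α → BCase1 k1 α b ∨ BCase2 f α b ∨ BCase3 k3 α b) := by
  intro α
  by_cases hrel : ω < α ∧ ¬ OrdInaccessible α
  · obtain ⟨hω, hni⟩ := hrel
    by_cases hcard : α.card.ord = α
    · -- α is an infinite cardinal
      have hℵ : ℵ₀ < α.card := by
        by_contra hle
        push_neg at hle
        have : α ≤ ω := by
          rw [← hcard, ← Cardinal.ord_aleph0]
          exact Cardinal.ord_le_ord.2 hle
        exact absurd hω (not_lt.2 this)
      have hni2 : ¬ α.card.IsInaccessible := fun h => hni ⟨hcard, h⟩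
      by_cases hreg : α.card.IsRegular
      · -- regular, so not a strong limit : case 3
        have hsl : ¬ IsStrongLimit α.card := fun h => hni2 ⟨hℵ, hreg.le_cof_ord, h.isStrongPrelimit⟩
        rw [show IsStrongLimit α.card ↔ α.card ≠ 0 ∧ ∀ x < α.card, 2 ^ x < α.card from
          ⟨fun h => ⟨h.ne_zero, fun x hx => h.isStrongPrelimit hx⟩, fun h => ⟨h.1, fun x hx => h.2 x hx⟩⟩] at hsl
        push_neg at hsl
        obtain ⟨c, hcα, hle⟩ := hsl (Cardinal.aleph0_pos.trans hℵ).ne'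
        have hcinf : ℵ₀ ≤ c := by
          by_contra hfin
          push_neg at hfin
          have h2 : (2 : Cardinal.{u}) ^ c < ℵ₀ :=
            Cardinal.power_lt_aleph0 (Cardinal.nat_lt_aleph0 2) hfin
          exact absurd ((hle.trans_lt h2).trans hℵ) (lt_irrefl _)
        have hltc : c.ord < α := by
          have := Cardinal.ord_lt_ord.2 hcα
          rwa [hcard] at this
        have q : α ∈ Set.Iio (((2 : Cardinal.{u}) ^ c).ord + 1) := by
          have : α ≤ ((2 : Cardinal.{u}) ^ c).ord := by
            have := Cardinal.ord_le_ord.2 hle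
            rwa [hcard] at this
          rw [Set.mem_Iio, Ordinal.add_one_eq_succ, Order.lt_succ_iff]
          exact this
        refine ⟨_, ?_, fun _ _ => Or.inr (Or.inr ⟨c, hcinf, hltc, q, rfl⟩)⟩
        exact bcase3_sub hk3b hω ⟨c, hcinf, hltc, q, rfl⟩
      · -- singular : case 2
        have hℵle : ℵ₀ ≤ α.card := hℵ.le
        have hcoflt : α.cof < α.card := by
          rcases lt_or_eq_of_le (Ordinal.cof_le_card α) with h | h
          · exact h
          · exact absurd ⟨hℵle, by rw [hcard]; exact h.ge⟩ hreg
        have hsing : α.cof.ord < α := by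
          have := Cardinal.ord_lt_ord.2 hcoflt
          rwa [hcard] at this
        refine ⟨_, ?_, fun _ _ => Or.inr (Or.inl ⟨hcard, hℵle, hsing, rfl⟩)⟩
        exact bcase2_sub hf hω ⟨hcard, hℵle, hsing, rfl⟩
    · -- α is not a cardinal : case 1
      have hlam : ℵ₀ ≤ α.card := Ordinal.aleph0_le_card.2 hω.le
      have hlt : α.card.ord < α := (Cardinal.ord_card_le α).lt_of_ne hcard
      have q : α ∈ Set.Iio ((Order.succ α.card).ord) := Cardinal.lt_ord_succ_card α
      refine ⟨_, ?_, fun _ _ => Or.inl ⟨α.card, hlam, hlt, q, rfl⟩⟩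
      exact bcase1_sub hk1b ⟨α.card, hlam, hlt, q, rfl⟩
  · exact ⟨∅, Set.empty_subset _, fun h1 h2 => absurd ⟨h1, h2⟩ hrel⟩

lemma exists_bad_list : ∃ a : Ordinal.{u} → Set Ordinal.{u}, (∀ α, a α ⊆ Set.Iio α) ∧
    ∀ α β : Ordinal.{u}, ω < α → α < β → ¬ OrdInaccessible α → ¬ OrdInaccessible β →
      a α = a β ∩ Set.Iio α → False := by
  have hk1e : ∀ lam : Cardinal.{u}, ∃ k : Set.Iio ((Order.succ lam).ord) → Set Ordinal.{u},
      Function.Injective k ∧ ∀ x, k x ⊆ Set.Iio lam.ord := by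
    intro lam
    apply aux_exists_inj
    rw [Cardinal.card_ord, Cardinal.card_ord]
    exact Order.succ_le_of_lt (Cardinal.cantor lam)
  choose k1 hk1i hk1b using hk1e
  have hk3e : ∀ c : Cardinal.{u}, ℵ₀ ≤ c →
      ∃ k : Set.Iio (((2 : Cardinal.{u}) ^ c).ord + 1) → Set Ordinal.{u},
      Function.Injective k ∧ ∀ x, k x ⊆ Set.Iio c.ord := by
    intro c hc
    apply aux_exists_inj
    rw [Ordinal.card_add, Cardinal.card_ord, Ordinal.card_one, Cardinal.card_ord]
    rw [Cardinal.add_one_eq (hc.trans (Cardinal.cantor c).le)]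
  choose k3 hk3i hk3b using hk3e
  choose f hf using fun α : Ordinal.{u} => Ordinal.exists_fundamental_sequence α
  choose b hbsub hbcase using exists_case k1 k3 f hk1b hk3b hf
  refine ⟨b, hbsub, ?_⟩
  intro α β hω hαβ hniα hniβ heq
  have hωβ := hω.trans hαβ
  have hα0 : (0 : Ordinal.{u}) < α := Ordinal.omega0_pos.trans hω
  have hα1 : (1 : Ordinal.{u}) < α := Ordinal.one_lt_omega0.trans hω
  have hm : ∀ x, x < α → (x ∈ b α ↔ x ∈ b β) := by
    intro x hx
    rw [heq]
    exact ⟨fun h => h.1, fun h => ⟨h, hx⟩⟩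
  rcases hbcase α hω hniα with h1 | h2 | h3 <;> rcases hbcase β hωβ hniβ with g1 | g2 | g3
  · exact nopair1 hk1i hk1b hαβ h1 g1 heq
  · exact (bcase1_marks h1).1 ((hm 0 hα0).2 (bcase2_marks g2).1)
  · exact (bcase1_marks h1).2 ((hm 1 hα1).2 (bcase3_marks g3).1)
  · exact (bcase1_marks g1).1 ((hm 0 hα0).1 (bcase2_marks h2).1)
  · exact nopair2 hf hω hαβ h2 g2 heq
  · exact (bcase2_marks h2).2 ((hm 1 hα1).2 (bcase3_marks g3).1)
  · exact (bcase1_marks g1).2 ((hm 1 hα1).1 (bcase3_marks h3).1)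
  · exact (bcase2_marks g2).2 ((hm 1 hα1).1 (bcase3_marks h3).1)
  · exact nopair3 hk3i hk3b hω hαβ h3 g3 heq


end SubtleAux

open Ordinal Cardinal Order

/-- The inaccessible cardinals below `κ` lie in the subtle filter: for subtle `S`,
the non-inaccessible part of `S` is not subtle, and `S` contains an inaccessible. -/
theorem subtle_inaccessibles (κ : Ordinal) (hκ : RegUncountable κ)
    (S : Set Ordinal) (hS : Subtle κ S) :
    ¬ Subtle κ {α ∈ S | ¬ OrdInaccessible α} ∧ ∃ α ∈ S, OrdInaccessible α := by
  obtain ⟨a, ha_sub, ha_pair⟩ := exists_bad_list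
  obtain ⟨hκcard, hκreg, hκunc⟩ := hκ
  have hωκ : ω < κ := by
    have := Cardinal.ord_lt_ord.2 hκunc
    rwa [Cardinal.ord_aleph0, hκcard] at this
  have hκlim : Order.IsSuccLimit κ := hκcard ▸ Cardinal.isSuccLimit_ord hκunc.le
  have hclub : IsClubIn κ (Set.Ioo ω κ) := by
    refine ⟨fun x hx => hx.2, ?_, ?_⟩
    · intro b hb
      refine ⟨max b (ω + 1), ⟨?_, ?_⟩, le_max_left _ _, ?_⟩
      · exact lt_of_lt_of_le (by rw [Ordinal.add_one_eq_succ]; exact lt_succ ω) (le_max_right _ _)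
      · exact max_lt hb (by rw [Ordinal.add_one_eq_succ]; exact hκlim.succ_lt hωκ)
      · exact max_lt hb (by rw [Ordinal.add_one_eq_succ]; exact hκlim.succ_lt hωκ)
    · intro α hα hα0 hunb
      obtain ⟨γ, hγC, _, hγα⟩ := hunb 0 (pos_iff_ne_zero.2 hα0)
      exact ⟨hγC.1.trans hγα, hα⟩
  constructor
  · rintro ⟨hTsub, hT⟩
    obtain ⟨α, ⟨⟨hαS, hαni⟩, hαC⟩, β, ⟨⟨hβS, hβni⟩, hβC⟩, hαβ, heq⟩ :=
      hT a (fun α _ => ha_sub α) _ hclub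
    exact ha_pair α β hαC.1 hαβ hαni hβni heq
  · by_contra hno
    push_neg at hno
    obtain ⟨α, ⟨hαS, hαC⟩, β, ⟨hβS, hβC⟩, hαβ, heq⟩ :=
      hS.2 a (fun α _ => ha_sub α) _ hclub
    exact ha_pair α β hαC.1 hαβ (hno α hαS) (hno β hβS) heq
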